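/- Fix z ∈ [0, u_max] and C ≥ 0, and suppose g(δ, z) ≤ −C < g(0, z), where δ = min(u*, û). Then there exists a unique s* ∈ (0, δ] with g(s*, z) = −C, and every s ∈ 𝒞_a with g(s, z) ≤ −C satisfies s ≥ s*; consequently s* minimizes s ↦ s² over the constraint set {s ∈ 𝒞_a : g(s, z) ≤ −C}. -/
import Mathlib


/-- Optimal left-boundary stabilizing control in the intermediate case: for
fixed `z ∈ [0, u_max]` and `C ≥ 0` with `g(δ, z) ≤ -C < g(0, z)`
(`δ = min(u*, û)`), there is a unique `s* ∈ (0, δ]` with `g(s*, z) = -C`;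
every `s ∈ 𝒞_a` satisfying the constraint `g(s, z) ≤ -C` satisfies `s ≥ s*`,
and `s*` minimizes `s ↦ s²` over the constraint set. -/
theorem left_stabilization_optimal_root
    (umax ustar uhat : ℝ) (f F : ℝ → ℝ) (g : ℝ → ℝ → ℝ)
    (humax : 0 < umax)
    (hustar : ustar ∈ Set.Icc (0 : ℝ) umax)
    (huhat : uhat = umax / 2)
    (hf : ∀ u : ℝ, f u = u * (1 - u / umax))
    (hF : ∀ u : ℝ, F u = u ^ 2 / 2 - u ^ 3 / (3 * umax))
    (hg : ∀ s z : ℝ, g s z = (s - ustar) * f s - (z - ustar) * f z - F s + F z) :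
    ∀ z ∈ Set.Icc (0 : ℝ) umax, ∀ C : ℝ, 0 ≤ C →
      g (min ustar uhat) z ≤ -C → -C < g 0 z →
      ∃ sstar ∈ Set.Ioc (0 : ℝ) (min ustar uhat),
        g sstar z = -C ∧
        (∀ s ∈ Set.Ioc (0 : ℝ) (min ustar uhat), g s z = -C → s = sstar) ∧
        (∀ s ∈ Set.Icc (0 : ℝ) ((2 * ustar + umax) / 4), g s z ≤ -C → sstar ≤ s) ∧
        sstar ∈ Set.Icc (0 : ℝ) ((2 * ustar + umax) / 4) ∧
        (∀ s ∈ Set.Icc (0 : ℝ) ((2 * ustar + umax) / 4), g s z ≤ -C →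
          sstar ^ 2 ≤ s ^ 2) := by
  intro z hz C hC hδC h0C
  set δ := min ustar uhat with hδdef
  have humax0 : umax ≠ 0 := ne_of_gt humax
  have hδle : δ ≤ (2 * ustar + umax) / 4 := by
    rcases le_total ustar uhat with h | h
    · have e : δ = ustar := min_eq_left h
      rw [e]; rw [huhat] at h; linarith
    · have e : δ = uhat := min_eq_right h
      rw [e, huhat]; rw [huhat] at h; linarith
  have hδ0 : 0 ≤ δ := le_min hustar.1 (by rw [huhat]; positivity)
  have hδpos : 0 < δ := by
    rcases hδ0.lt_or_eq with h | h
    · exact h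
    · exfalso; rw [← h] at hδC; linarith
  set c : ℝ := F z - (z - ustar) * f z with hc
  have hfun : (fun t : ℝ => g t z)
      = fun t => (t - ustar) * (t * (1 - t / umax)) - (t ^ 2 / 2 - t ^ 3 / (3 * umax)) + c := by
    funext t; rw [hg, hf, hF]; ring
  have hder : ∀ s : ℝ, HasDerivAt (fun t => g t z) ((s - ustar) * (1 - 2 * s / umax)) s := by
    intro s
    rw [hfun]
    have h1 : HasDerivAt (fun t : ℝ =>
        (t - ustar) * (t * (1 - t / umax)) - (t ^ 2 / 2 - t ^ 3 / (3 * umax)) + c)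
        ((1 : ℝ) * (s * (1 - s / umax)) + (s - ustar) * (1 * (1 - s / umax) + s * (0 - 1 / umax))
          - ((↑2 * s ^ (2 - 1)) / 2 - (↑3 * s ^ (3 - 1)) / (3 * umax)) + 0) s := by
      exact ((((hasDerivAt_id' (x := s)).sub_const ustar).mul
        ((hasDerivAt_id' (x := s)).mul
          ((hasDerivAt_const s (1 : ℝ)).sub ((hasDerivAt_id' (x := s)).div_const umax)))).sub
        (((hasDerivAt_pow 2 s).div_const 2).sub ((hasDerivAt_pow 3 s).div_const (3 * umax)))).add
        (hasDerivAt_const s c)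
    convert h1 using 1
    push_cast
    field_simp
    ring
  have hcont : ContinuousOn (fun t => g t z) (Set.Icc (0 : ℝ) δ) :=
    fun t _ => ((hder t).continuousAt).continuousWithinAt
  have hanti : StrictAntiOn (fun t => g t z) (Set.Icc (0 : ℝ) δ) := by
    apply strictAntiOn_of_deriv_neg (convex_Icc 0 δ) hcont
    intro t ht
    rw [interior_Icc] at ht
    rw [(hder t).deriv]
    have ht1 : t < ustar := lt_of_lt_of_le ht.2 (min_le_left _ _)
    have ht2 : t < uhat := lt_of_lt_of_le ht.2 (min_le_right _ _)
    rw [huhat] at ht2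
    have hpos : 0 < 1 - 2 * t / umax := by
      rw [sub_pos, div_lt_one humax]; linarith
    exact mul_neg_of_neg_of_pos (by linarith) hpos
  have hmem : (-C) ∈ Set.Icc (g δ z) (g 0 z) := ⟨hδC, le_of_lt h0C⟩
  obtain ⟨sstar, hsmem, hsval0⟩ := intermediate_value_Icc' hδ0 hcont hmem
  have hsval : g sstar z = -C := hsval0
  have hspos : 0 < sstar := by
    rcases hsmem.1.lt_or_eq with h | h
    · exact h
    · exfalso; rw [← h] at hsval; linarith
  have hsIoc : sstar ∈ Set.Ioc (0 : ℝ) δ := ⟨hspos, hsmem.2⟩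
  have hmin : ∀ s ∈ Set.Icc (0 : ℝ) ((2 * ustar + umax) / 4), g s z ≤ -C → sstar ≤ s := by
    intro s hs hgs
    by_contra hlt
    push_neg at hlt
    have hsIcc : s ∈ Set.Icc (0 : ℝ) δ := ⟨hs.1, le_trans (le_of_lt hlt) hsmem.2⟩
    have := hanti hsIcc hsmem hlt
    simp only at this
    rw [hsval] at this
    linarith
  refine ⟨sstar, hsIoc, hsval, ?_, hmin, ⟨hsmem.1, le_trans hsmem.2 hδle⟩, ?_⟩
  · intro s hs hgs
    exact hanti.injOn ⟨le_of_lt hs.1, hs.2⟩ hsmem (by rw [hgs, hsval])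
  · intro s hs hgs
    exact pow_le_pow_left₀ (le_of_lt hspos) (hmin s hs hgs) 2
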